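/- (Theorem: consistency of the D₄(a₁) flat-coordinate formulas.) Let t₁, t₂, t₃, t₄, Z ∈ ℂ satisfy Z² − (t₄² + 3t₃² + 24t₂) = 0 and Z ≠ 0. Define y₁ = −(16/9)(216t₁t₃ − 288t₂t₄ + 24t₂Z + 126t₃²t₄ + 3t₃²Z − 44t₄³ + t₄²Z), y₂ = 4(4t₁ − t₃t₄), y₃ = 8(3t₄² − 3t₃² + 8t₂), y₄ = 8t₄. Define the Jacobian entries J_{iα} := ∂yᵢ/∂tₐ + (∂yᵢ/∂Z)·ζₐ, where the partial derivatives of the above polynomial expressions are taken treating t₁,…,t₄,Z as independent variables and ζ₁ = 0, ζ₂ = 12/Z, ζ₃ = 3t₃/Z, ζ₄ = t₄/Z. Define the symmetric matrix g with entries g^{11} = (1/864)(t₄(19t₄² + 63t₃² − 144t₂) − 2Z(4t₄² + 3t₃² + 24t₂)), g^{12} = (1/96)t₃(t₄(7t₄ − 2Z) + 3t₃² + 48t₂), g^{22} = (1/288)(t₄(7t₄² + 27t₃² + 144t₂) − 2Z(t₄² + 12t₃² + 24t₂)), g^{13} = (1/18)(6t₂ + 3t₃² − t₄(t₄ + Z)),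 g^{23} = t₁ + (1/6)t₃(2t₄ − Z), g^{33} = (1/6)(t₄ − 2Z), g^{14} = t₁, g^{24} = t₂, g^{34} = (1/2)t₃, g^{44} = (1/2)t₄. Then for all i, j ∈ {1,2,3,4}: ∑_{α,β=1}^{4} J_{iα} g^{αβ} J_{jβ} = G^{ij}(y₁,y₂,y₃,y₄), where G^{11} = 30y₁y₃ − 180y₂²y₄ + 30y₁y₄² − 30y₃y₄³ + 6y₄⁵, G^{12} = 6y₂y₃, G^{13} = 32y₁y₄ − 96y₂² + 12y₃² − 24y₃y₄² + 4y₄⁴, G^{14} = 12y₁, G^{22} = (1/6)(2y₁ − 3y₃y₄ + y₄³), G^{23} = 4y₂y₄, G^{24} = 8y₂, G^{33} = 16y₁, G^{34} = 8y₃, G^{44} = 4y₄. -/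
import Mathlib


open MvPolynomial

noncomputable section

/-- The `D₄` basic invariants as polynomial expressions in the flat coordinates
`t₁, t₂, t₃, t₄` (variables `X 0, …, X 3`) and the auxiliary variable `Z` (variable `X 4`)
of the algebraic Frobenius manifold `D₄(a₁)`. -/
def YD4 : Fin 4 → MvPolynomial (Fin 5) ℂ :=
  ![C (-(16 : ℂ) / 9) *
      (216 * X 0 * X 2 - 288 * X 1 * X 3 + 24 * X 1 * X 4 + 126 * X 2 ^ 2 * X 3
        + 3 * X 2 ^ 2 * X 4 - 44 * X 3 ^ 3 + X 3 ^ 2 * X 4),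
    4 * (4 * X 0 - X 2 * X 3),
    8 * (3 * X 3 ^ 2 - 3 * X 2 ^ 2 + 8 * X 1),
    8 * X 3]

/-- The intersection form of the algebraic Frobenius manifold `D₄(a₁)` in its flat
coordinates `t₁, …, t₄` with auxiliary algebraic variable `Z`. -/
def gD4 (t₁ t₂ t₃ t₄ Z : ℂ) : Matrix (Fin 4) (Fin 4) ℂ :=
  !![(1 / 864) * (t₄ * (19 * t₄ ^ 2 + 63 * t₃ ^ 2 - 144 * t₂)
        - 2 * Z * (4 * t₄ ^ 2 + 3 * t₃ ^ 2 + 24 * t₂)),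
      (1 / 96) * t₃ * (t₄ * (7 * t₄ - 2 * Z) + 3 * t₃ ^ 2 + 48 * t₂),
      (1 / 18) * (6 * t₂ + 3 * t₃ ^ 2 - t₄ * (t₄ + Z)),
      t₁;
    (1 / 96) * t₃ * (t₄ * (7 * t₄ - 2 * Z) + 3 * t₃ ^ 2 + 48 * t₂),
      (1 / 288) * (t₄ * (7 * t₄ ^ 2 + 27 * t₃ ^ 2 + 144 * t₂)
        - 2 * Z * (t₄ ^ 2 + 12 * t₃ ^ 2 + 24 * t₂)),
      t₁ + (1 / 6) * t₃ * (2 * t₄ - Z),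
      t₂;
    (1 / 18) * (6 * t₂ + 3 * t₃ ^ 2 - t₄ * (t₄ + Z)),
      t₁ + (1 / 6) * t₃ * (2 * t₄ - Z),
      (1 / 6) * (t₄ - 2 * Z),
      (1 / 2) * t₃;
    t₁, t₂, (1 / 2) * t₃, (1 / 2) * t₄]

/-- The `D₄` intersection form expressed in the basic invariants `y₁, …, y₄`. -/
def GD4 (y₁ y₂ y₃ y₄ : ℂ) : Matrix (Fin 4) (Fin 4) ℂ :=
  !![30 * y₁ * y₃ - 180 * y₂ ^ 2 * y₄ + 30 * y₁ * y₄ ^ 2 - 30 * y₃ * y₄ ^ 3 + 6 * y₄ ^ 5,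
      6 * y₂ * y₃,
      32 * y₁ * y₄ - 96 * y₂ ^ 2 + 12 * y₃ ^ 2 - 24 * y₃ * y₄ ^ 2 + 4 * y₄ ^ 4,
      12 * y₁;
    6 * y₂ * y₃, (1 / 6) * (2 * y₁ - 3 * y₃ * y₄ + y₄ ^ 3), 4 * y₂ * y₄, 8 * y₂;
    32 * y₁ * y₄ - 96 * y₂ ^ 2 + 12 * y₃ ^ 2 - 24 * y₃ * y₄ ^ 2 + 4 * y₄ ^ 4,
      4 * y₂ * y₄, 16 * y₁, 8 * y₃;
    12 * y₁, 8 * y₂, 8 * y₃, 4 * y₄]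

lemma pderiv_ofNat' (i : Fin 5) (n : ℕ) [n.AtLeastTwo] :
    pderiv i (no_index (OfNat.ofNat n) : MvPolynomial (Fin 5) ℂ) = 0 := by
  rw [← map_ofNat (C : ℂ →+* _) n, pderiv_C]

/-- The Jacobian matrix of `YD4`, evaluated at the point `(t₁, t₂, t₃, t₄, Z)`. -/
def JD4 (t₁ t₂ t₃ t₄ Z : ℂ) : Matrix (Fin 4) (Fin 5) ℂ :=
  !![(-16/9) * (216 * t₃), (-16/9) * (-288 * t₄ + 24 * Z),
      (-16/9) * (216 * t₁ + 252 * t₃ * t₄ + 6 * t₃ * Z),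
      (-16/9) * (-288 * t₂ + 126 * t₃ ^ 2 - 132 * t₄ ^ 2 + 2 * t₄ * Z),
      (-16/9) * (24 * t₂ + 3 * t₃ ^ 2 + t₄ ^ 2);
    16, 0, -4 * t₄, -4 * t₃, 0;
    0, 64, -48 * t₃, 48 * t₄, 0;
    0, 0, 0, 8, 0]

set_option maxHeartbeats 1000000 in
lemma hJD4 (t₁ t₂ t₃ t₄ Z : ℂ) (i : Fin 4) (α : Fin 5) :
    eval ![t₁, t₂, t₃, t₄, Z] (pderiv α (YD4 i)) = JD4 t₁ t₂ t₃ t₄ Z i α := by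
  fin_cases i <;> fin_cases α <;>
    · simp [YD4, JD4, Matrix.vecHead, Matrix.vecTail, pderiv_mul, pderiv_ofNat']
      try ring

/-- The values of `YD4`, evaluated at the point `(t₁, t₂, t₃, t₄, Z)`. -/
def yval (t₁ t₂ t₃ t₄ Z : ℂ) : Fin 4 → ℂ :=
  ![(-16/9) * (216 * t₁ * t₃ - 288 * t₂ * t₄ + 24 * t₂ * Z + 126 * t₃ ^ 2 * t₄
      + 3 * t₃ ^ 2 * Z - 44 * t₄ ^ 3 + t₄ ^ 2 * Z),
    4 * (4 * t₁ - t₃ * t₄),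
    8 * (3 * t₄ ^ 2 - 3 * t₃ ^ 2 + 8 * t₂),
    8 * t₄]

set_option maxHeartbeats 1000000 in
lemma hYval (t₁ t₂ t₃ t₄ Z : ℂ) (i : Fin 4) :
    eval ![t₁, t₂, t₃, t₄, Z] (YD4 i) = yval t₁ t₂ t₃ t₄ Z i := by
  fin_cases i <;>
    · simp [YD4, yval]
      try ring

lemma fin4_mk0 (h : 0 < 4) : (⟨0, h⟩ : Fin 4) = 0 := rfl
lemma fin4_mk1 (h : 1 < 4) : (⟨1, h⟩ : Fin 4) = 1 := rfl
lemma fin4_mk2 (h : 2 < 4) : (⟨2, h⟩ : Fin 4) = 2 := rfl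
lemma fin4_mk3 (h : 3 < 4) : (⟨3, h⟩ : Fin 4) = 3 := rfl

set_option maxHeartbeats 4000000 in
/-- Consistency of the `D₄(a₁)` flat-coordinate formulas:
`∑_{α,β} J_{iα} g^{αβ} J_{jβ} = G^{ij}(y₁, …, y₄)`, where
`J_{iα} = ∂yᵢ/∂tₐ + (∂yᵢ/∂Z)·ζₐ` with `ζ = (0, 12/Z, 3t₃/Z, t₄/Z)`. -/
theorem statement_12 (t₁ t₂ t₃ t₄ Z : ℂ)
    (hrel : Z ^ 2 - (t₄ ^ 2 + 3 * t₃ ^ 2 + 24 * t₂) = 0) (hZ : Z ≠ 0) :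
    ∀ i j : Fin 4,
      (∑ α : Fin 4, ∑ β : Fin 4,
        (eval ![t₁, t₂, t₃, t₄, Z] (pderiv α.castSucc (YD4 i)) +
            eval ![t₁, t₂, t₃, t₄, Z] (pderiv (4 : Fin 5) (YD4 i)) *
              ![0, 12 / Z, 3 * t₃ / Z, t₄ / Z] α) *
          gD4 t₁ t₂ t₃ t₄ Z α β *
          (eval ![t₁, t₂, t₃, t₄, Z] (pderiv β.castSucc (YD4 j)) +
            eval ![t₁, t₂, t₃, t₄, Z] (pderiv (4 : Fin 5) (YD4 j)) *
              ![0, 12 / Z, 3 * t₃ / Z, t₄ / Z] β))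
      = GD4 (eval ![t₁, t₂, t₃, t₄, Z] (YD4 0)) (eval ![t₁, t₂, t₃, t₄, Z] (YD4 1))
          (eval ![t₁, t₂, t₃, t₄, Z] (YD4 2)) (eval ![t₁, t₂, t₃, t₄, Z] (YD4 3)) i j := by
  have ht : t₂ = (Z ^ 2 - t₄ ^ 2 - 3 * t₃ ^ 2) / 24 := by linear_combination -hrel / 24
  subst ht
  have hu : Z * Z⁻¹ = 1 := mul_inv_cancel₀ hZ
  intro i j
  fin_cases i <;> fin_cases j <;>
    simp only [Fin.sum_univ_four, fin4_mk0, fin4_mk1, fin4_mk2, fin4_mk3] <;>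
    rw [show Fin.castSucc (0 : Fin 4) = (0 : Fin 5) from rfl,
       show Fin.castSucc (1 : Fin 4) = (1 : Fin 5) from rfl,
       show Fin.castSucc (2 : Fin 4) = (2 : Fin 5) from rfl,
       show Fin.castSucc (3 : Fin 4) = (3 : Fin 5) from rfl] <;>
    (repeat rw [hJD4]) <;> (repeat rw [hYval]) <;>
    simp only [JD4, yval, gD4, GD4, Matrix.cons_val', Matrix.cons_val_zero,
      Matrix.cons_val_one, Matrix.head_cons, Matrix.empty_val', Matrix.cons_val_fin_one,
      Matrix.head_fin_const, Matrix.of_apply, Matrix.cons_val_two, Matrix.cons_val_three,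
      Matrix.tail_cons, Matrix.cons_val_four, Matrix.cons_val_succ]
  · linear_combination ((-4352/81) * Z ^ 5 + (-256/81) * Z ^ 6 * Z⁻¹ + (17408/81) * t₄ * Z ^ 4 + (1024/81) * t₄ * Z ^ 5 * Z⁻¹ + (-8192/9) * t₄ ^ 2 * Z ^ 3 + (14336/27) * t₃ ^ 2 * Z ^ 3 + (-2048/27) * t₃ ^ 2 * Z ^ 4 * Z⁻¹ + (-70144/27) * t₃ ^ 2 * t₄ * Z ^ 2 + (2560/27) * t₃ ^ 2 * t₄ * Z ^ 3 * Z⁻¹ + (56320/9) * t₃ ^ 2 * t₄ ^ 2 * Z + (-26624/9) * t₁ * t₃ * Z ^ 2 + (2048/9) * t₁ * t₃ * Z ^ 3 * Z⁻¹ + (65536/3) * t₁ * t₃ * t₄ * Z + 16384 * t₁ ^ 2 * Z) * hu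
  · linear_combination ((-128/27) * t₃ * Z ^ 3 + (-256/27) * t₃ * t₄ * Z ^ 2 + (640/27) * t₃ * t₄ ^ 2 * Z + (512/9) * t₁ * t₄ * Z) * hu
  · linear_combination ((256/27) * Z ^ 4 + (-2048/27) * t₄ * Z ^ 3 + (-1024/9) * t₃ ^ 2 * Z ^ 2 + (2560/9) * t₃ ^ 2 * t₄ * Z + (2048/3) * t₁ * t₃ * Z) * hu
  · linear_combination ((-64/9) * Z ^ 3) * hu
  · linear_combination ((-128/27) * t₃ * Z ^ 3 + (-256/27) * t₃ * t₄ * Z ^ 2 + (640/27) * t₃ * t₄ ^ 2 * Z + (512/9) * t₁ * t₄ * Z) * hu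
  · linear_combination (0) * hu
  · linear_combination (0) * hu
  · linear_combination (0) * hu
  · linear_combination ((256/27) * Z ^ 4 + (-2048/27) * t₄ * Z ^ 3 + (-1024/9) * t₃ ^ 2 * Z ^ 2 + (2560/9) * t₃ ^ 2 * t₄ * Z + (2048/3) * t₁ * t₃ * Z) * hu
  · linear_combination (0) * hu
  · linear_combination (0) * hu
  · linear_combination (0) * hu
  · linear_combination ((-64/9) * Z ^ 3) * hu
  · linear_combination (0) * hu
  · linear_combination (0) * hu
  · linear_combination (0) * hu
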